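/- arXiv:2008.09937 — 2 statements merged into one kernel-verified Lean document; each statement's English description precedes it below -/
import Mathlib

section
/- Let 𝔥 be the 2-dimensional Lie algebra over k with basis {x, y} and bracket [x,y] = x = −[y,x], [x,x] = [y,y] = 0. Let A = k⟨a, c, d⟩/(ad − a, da − a, cd − dc) with comultiplication Δ(a) = a⊗a, Δ(d) = d⊗d, Δ(c) = c⊗a + d⊗c and counit ε(a) = ε(d) = 1, ε(c) = 0. Then A is a bialgebra and the coaction ρ(x) = a⊗x, ρ(y) = c⊗x + d⊗y makes 𝔥 an A-comodule such that the bracket [−,−]: 𝔥⊗𝔥 → 𝔥 is A-colinear. -/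
open TensorProduct

set_option maxHeartbeats 1600000
set_option synthInstance.maxHeartbeats 400000

/-- The defining relations `ad = a`, `da = a`, `cd = dc` of
`A = k⟨a,c,d⟩/(ad−a, da−a, cd−dc)`, with `a = ι 0`, `c = ι 1`, `d = ι 2`. -/
inductive lieRel (k : Type*) [Field k] : FreeAlgebra k (Fin 3) → FreeAlgebra k (Fin 3) → Prop
  | ad : lieRel k (FreeAlgebra.ι k 0 * FreeAlgebra.ι k 2) (FreeAlgebra.ι k 0)
  | da : lieRel k (FreeAlgebra.ι k 2 * FreeAlgebra.ι k 0) (FreeAlgebra.ι k 0)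
  | cd : lieRel k (FreeAlgebra.ι k 1 * FreeAlgebra.ι k 2)
      (FreeAlgebra.ι k 2 * FreeAlgebra.ι k 1)

/-- Let `𝔥 = kx ⊕ ky` (realized as `k × k`, `x = (1,0)`, `y = (0,1)`)
with bracket `[x,y] = x = −[y,x]`, `[x,x] = [y,y] = 0`, and let
`A = k⟨a,c,d⟩/(ad−a, da−a, cd−dc)` with `Δ(a) = a⊗a`, `Δ(c) = c⊗a + d⊗c`,
`Δ(d) = d⊗d`, `ε(a) = ε(d) = 1`, `ε(c) = 0`.  Then `A` is a bialgebra and the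
coaction `ρ(x) = a⊗x`, `ρ(y) = c⊗x + d⊗y` makes `𝔥` an `A`-comodule for which the
bracket is `A`-colinear. -/
theorem stmt14 (k : Type*) [Field k]
    (br : (k × k) →ₗ[k] (k × k) →ₗ[k] (k × k))
    (x y : k × k) (hx : x = (1, 0)) (hy : y = (0, 1))
    (hxx : br x x = 0) (hxy : br x y = x) (hyx : br y x = -x) (hyy : br y y = 0) :
    let A := RingQuot (lieRel k)
    let π := RingQuot.mkAlgHom k (lieRel k)
    let a := π (FreeAlgebra.ι k 0)
    let c := π (FreeAlgebra.ι k 1)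
    let d := π (FreeAlgebra.ι k 2)
    ∃ (Δ : A →ₐ[k] A ⊗[k] A) (ε : A →ₐ[k] k) (ρ : (k × k) →ₗ[k] A ⊗[k] (k × k)),
      -- comultiplication and counit on generators
      Δ a = a ⊗ₜ[k] a ∧ Δ c = c ⊗ₜ[k] a + d ⊗ₜ[k] c ∧ Δ d = d ⊗ₜ[k] d
      ∧ ε a = 1 ∧ ε c = 0 ∧ ε d = 1
      -- bialgebra axioms
      ∧ (∀ z : A, (TensorProduct.assoc k A A A)
            (TensorProduct.map Δ.toLinearMap LinearMap.id (Δ z))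
          = TensorProduct.map LinearMap.id Δ.toLinearMap (Δ z))
      ∧ (∀ z : A, (TensorProduct.lid k A)
            (TensorProduct.map ε.toLinearMap LinearMap.id (Δ z)) = z)
      ∧ (∀ z : A, (TensorProduct.rid k A)
            (TensorProduct.map LinearMap.id ε.toLinearMap (Δ z)) = z)
      -- the coaction and the comodule axioms
      ∧ ρ x = a ⊗ₜ[k] x ∧ ρ y = c ⊗ₜ[k] x + d ⊗ₜ[k] y
      ∧ (∀ v : k × k, (TensorProduct.assoc k A A (k × k))
            (TensorProduct.map Δ.toLinearMap LinearMap.id (ρ v))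
          = TensorProduct.map LinearMap.id ρ (ρ v))
      ∧ (∀ v : k × k, (TensorProduct.lid k (k × k))
            (TensorProduct.map ε.toLinearMap LinearMap.id (ρ v)) = v)
      -- colinearity of the bracket, checked on the basis `x, y` of `𝔥`
      ∧ (a * a) ⊗ₜ[k] br x x = ρ (br x x)
      ∧ (a * c) ⊗ₜ[k] br x x + (a * d) ⊗ₜ[k] br x y = ρ (br x y)
      ∧ (c * a) ⊗ₜ[k] br x x + (d * a) ⊗ₜ[k] br y x = ρ (br y x)
      ∧ (c * c) ⊗ₜ[k] br x x + (c * d) ⊗ₜ[k] br x y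
          + (d * c) ⊗ₜ[k] br y x + (d * d) ⊗ₜ[k] br y y = ρ (br y y) := by
  intro A π a c d
  have had : a * d = a := by
    simpa [map_mul] using RingQuot.mkAlgHom_rel k (lieRel.ad (k := k))
  have hda : d * a = a := by
    simpa [map_mul] using RingQuot.mkAlgHom_rel k (lieRel.da (k := k))
  have hcd : c * d = d * c := by
    simpa [map_mul] using RingQuot.mkAlgHom_rel k (lieRel.cd (k := k))
  -- comultiplication
  let Δ : A →ₐ[k] A ⊗[k] A := RingQuot.liftAlgHom k
    ⟨FreeAlgebra.lift k ![a ⊗ₜ[k] a, c ⊗ₜ[k] a + d ⊗ₜ[k] c, d ⊗ₜ[k] d], by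
      rintro u v (h | h | h) <;>
        simp [Algebra.TensorProduct.tmul_mul_tmul, add_mul, mul_add, had, hda, hcd]⟩
  have hΔa : Δ a = a ⊗ₜ[k] a := by
    show Δ (π (FreeAlgebra.ι k 0)) = _
    rw [RingQuot.liftAlgHom_mkAlgHom_apply]; simp
  have hΔc : Δ c = c ⊗ₜ[k] a + d ⊗ₜ[k] c := by
    show Δ (π (FreeAlgebra.ι k 1)) = _
    rw [RingQuot.liftAlgHom_mkAlgHom_apply]; simp
  have hΔd : Δ d = d ⊗ₜ[k] d := by
    show Δ (π (FreeAlgebra.ι k 2)) = _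
    rw [RingQuot.liftAlgHom_mkAlgHom_apply]; simp
  -- counit
  let ε : A →ₐ[k] k := RingQuot.liftAlgHom k
    ⟨FreeAlgebra.lift k ![(1 : k), 0, 1], by
      rintro u v (h | h | h) <;> simp⟩
  have hεa : ε a = 1 := by
    show ε (π (FreeAlgebra.ι k 0)) = _
    rw [RingQuot.liftAlgHom_mkAlgHom_apply]; simp
  have hεc : ε c = 0 := by
    show ε (π (FreeAlgebra.ι k 1)) = _
    rw [RingQuot.liftAlgHom_mkAlgHom_apply]; simp
  have hεd : ε d = 1 := by
    show ε (π (FreeAlgebra.ι k 2)) = _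
    rw [RingQuot.liftAlgHom_mkAlgHom_apply]; simp
  -- coaction
  let ρ : (k × k) →ₗ[k] A ⊗[k] (k × k) :=
    (LinearMap.fst k k k).smulRight (a ⊗ₜ[k] x)
      + (LinearMap.snd k k k).smulRight (c ⊗ₜ[k] x + d ⊗ₜ[k] y)
  have hρ : ∀ v : k × k, ρ v = v.1 • (a ⊗ₜ[k] x) + v.2 • (c ⊗ₜ[k] x + d ⊗ₜ[k] y) := by
    intro v; simp [ρ]
  have hρx : ρ x = a ⊗ₜ[k] x := by rw [hρ]; simp [hx]
  have hρy : ρ y = c ⊗ₜ[k] x + d ⊗ₜ[k] y := by rw [hρ]; simp [hy]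
  -- coassociativity of Δ
  have coassoc : ∀ z : A, (TensorProduct.assoc k A A A)
      (TensorProduct.map Δ.toLinearMap LinearMap.id (Δ z))
      = TensorProduct.map LinearMap.id Δ.toLinearMap (Δ z) := by
    have key : ((Algebra.TensorProduct.assoc k k k A A A).toAlgHom.comp
          ((Algebra.TensorProduct.map Δ (AlgHom.id k A)).comp Δ))
        = (Algebra.TensorProduct.map (AlgHom.id k A) Δ).comp Δ := by
      apply RingQuot.ringQuot_ext'
      apply FreeAlgebra.hom_ext
      funext i
      fin_cases i <;>
        simp [hΔa, hΔc, hΔd, Algebra.TensorProduct.map_tmul, tmul_add, add_tmul, add_assoc, Δ, a, c, d, π]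
    intro z
    exact AlgHom.congr_fun key z
  have counit_l : ∀ z : A, (TensorProduct.lid k A)
      (TensorProduct.map ε.toLinearMap LinearMap.id (Δ z)) = z := by
    have key : ((Algebra.TensorProduct.lid k A).toAlgHom.comp
          ((Algebra.TensorProduct.map ε (AlgHom.id k A)).comp Δ)) = AlgHom.id k A := by
      apply RingQuot.ringQuot_ext'
      apply FreeAlgebra.hom_ext
      funext i
      fin_cases i <;>
        simp [hΔa, hΔc, hΔd, hεa, hεc, hεd, Algebra.TensorProduct.map_tmul,
          Algebra.TensorProduct.lid_tmul, Δ, ε, a, c, d, π] <;> rfl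
    intro z
    exact AlgHom.congr_fun key z
  have rid_eq : ∀ w : A ⊗[k] k, (Algebra.TensorProduct.rid k k A) w
      = (TensorProduct.rid k A) w := by
    intro w
    induction w using TensorProduct.induction_on with
    | zero => simp
    | tmul u s => simp [Algebra.TensorProduct.rid_tmul, TensorProduct.rid_tmul]
    | add u v hu hv => simp [map_add, hu, hv]
  have counit_r : ∀ z : A, (TensorProduct.rid k A)
      (TensorProduct.map LinearMap.id ε.toLinearMap (Δ z)) = z := by
    have key : ((Algebra.TensorProduct.rid k k A).toAlgHom.comp
          ((Algebra.TensorProduct.map (AlgHom.id k A) ε).comp Δ)) = AlgHom.id k A := by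
      apply RingQuot.ringQuot_ext'
      apply FreeAlgebra.hom_ext
      funext i
      fin_cases i <;>
        simp [hΔa, hΔc, hΔd, hεa, hεc, hεd, Algebra.TensorProduct.map_tmul,
          Algebra.TensorProduct.rid_tmul, Δ, ε, a, c, d, π] <;> rfl
    intro z
    have := AlgHom.congr_fun key z
    simp [rid_eq] at this
    exact this
  refine ⟨Δ, ε, ρ, hΔa, hΔc, hΔd, hεa, hεc, hεd, coassoc, counit_l, counit_r, hρx, hρy,
    ?_, ?_, ?_, ?_, ?_, ?_⟩
  · intro v
    rw [hρ]
    simp only [map_add, map_smul, TensorProduct.map_tmul, LinearMap.id_coe, id_eq,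
      AlgHom.toLinearMap_apply, hΔa, hΔc, hΔd, TensorProduct.assoc_tmul, add_tmul,
      TensorProduct.tmul_add, hρx, hρy]
    abel
  · intro v
    rw [hρ]
    simp only [map_add, map_smul, TensorProduct.map_tmul, LinearMap.id_coe, id_eq,
      AlgHom.toLinearMap_apply, hεa, hεc, hεd, TensorProduct.lid_tmul]
    rw [hx, hy]
    ext <;> simp
  · rw [hxx, map_zero, TensorProduct.tmul_zero]
  · rw [hxx, hxy, TensorProduct.tmul_zero, zero_add, had, hρx]
  · rw [hxx, hyx, TensorProduct.tmul_zero, zero_add, hda, map_neg, hρx, TensorProduct.tmul_neg]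
  · rw [hxx, hxy, hyx, hyy, map_zero, TensorProduct.tmul_zero, TensorProduct.tmul_zero,
      TensorProduct.tmul_neg, hcd]
    abel
end

section
/- Let A be a bialgebra over k and V a finite-dimensional left A-comodule with coaction ρ_A(x_i) = Σⱼ aᵢʲ ⊗ xⱼ in a fixed basis {x₁,…,xₙ}. Suppose f: V^{⊗n₁} → V^{⊗n₂} is A-colinear with matrix coefficients f_I^J. Then the elements aᵢʲ satisfy Σ_J a_I^J f_J^K = Σ_J f_I^J a_J^K for all multi-indices I, K, where a_I^J := a_{i₁}^{j₁}⋯a_{iₐ}^{jₐ}; hence the assignment tᵢʲ ↦ aᵢʲ defines a bialgebra homomorphism from the universal bialgebra A(f) = TC/𝕀_f to A. -/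
open TensorProduct

noncomputable def matDelta (k : Type*) [Field k] (n : ℕ) :
    FreeAlgebra k (Fin n × Fin n) →ₐ[k]
      (FreeAlgebra k (Fin n × Fin n) ⊗[k] FreeAlgebra k (Fin n × Fin n)) :=
  FreeAlgebra.lift k
    (fun p => ∑ l : Fin n, (FreeAlgebra.ι k (p.1, l)) ⊗ₜ[k] (FreeAlgebra.ι k (l, p.2)))

noncomputable def matEps (k : Type*) [Field k] (n : ℕ) :
    FreeAlgebra k (Fin n × Fin n) →ₐ[k] k :=
  FreeAlgebra.lift k (fun p => if p.1 = p.2 then (1 : k) else 0)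

noncomputable def tIJ (k : Type*) [Field k] {n a : ℕ} (I J : Fin a → Fin n) :
    FreeAlgebra k (Fin n × Fin n) :=
  (List.ofFn fun s => FreeAlgebra.ι k (I s, J s)).prod

/-- `a_I^J := a_{i₁}^{j₁} ⋯ a_{iₐ}^{jₐ}` in `A`. -/
noncomputable def aIJ (k : Type*) {A : Type*} [Field k] [Ring A] [Algebra k A] {n ℓ : ℕ}
    (a : Fin n → Fin n → A) (I J : Fin ℓ → Fin n) : A :=
  (List.ofFn fun s => a (I s) (J s)).prod

/-- Let `A` be a bialgebra, `V` an `n`-dimensional `A`-comodule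
(modelled on `(Fin n → Fin ℓ) → k` in each tensor power, with diagonal coaction
`ρ_ℓ(x_I) = Σ_J a_I^J ⊗ x_J`), and `f : V^{⊗n₁} → V^{⊗n₂}` an `A`-colinear map.
Then `Σ_J a_I^J f_J^K = Σ_J f_I^J a_J^K` for all multi-indices `I, K`; hence
`tᵢʲ ↦ aᵢʲ` defines a bialgebra homomorphism from the universal bialgebra
`A(f) = TC/𝕀_f` to `A` (i.e. an algebra map `TC → A` vanishing on the generators
of `𝕀_f` and commuting with comultiplications and counits). -/
theorem stmt18 (k A : Type*) [Field k] [Ring A] [Bialgebra k A]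
    (n n₁ n₂ : ℕ) (a : Fin n → Fin n → A)
    (hΔ : ∀ i j, Coalgebra.comul (R := k) (a i j) = ∑ l : Fin n, a i l ⊗ₜ[k] a l j)
    (hε : ∀ i j, Coalgebra.counit (R := k) (a i j) = if i = j then (1 : k) else 0)
    (ρ₁ : ((Fin n₁ → Fin n) → k) →ₗ[k] A ⊗[k] ((Fin n₁ → Fin n) → k))
    (hρ₁ : ∀ I : Fin n₁ → Fin n,
      ρ₁ ((Pi.single I (1:k))) = ∑ J : Fin n₁ → Fin n, aIJ k a I J ⊗ₜ[k] (Pi.single J (1:k)))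
    (ρ₂ : ((Fin n₂ → Fin n) → k) →ₗ[k] A ⊗[k] ((Fin n₂ → Fin n) → k))
    (hρ₂ : ∀ I : Fin n₂ → Fin n,
      ρ₂ ((Pi.single I (1:k))) = ∑ J : Fin n₂ → Fin n, aIJ k a I J ⊗ₜ[k] (Pi.single J (1:k)))
    (f : ((Fin n₁ → Fin n) → k) →ₗ[k] ((Fin n₂ → Fin n) → k))
    (hcolin : ∀ v, TensorProduct.map LinearMap.id f (ρ₁ v) = ρ₂ (f v)) :
    (∀ (I : Fin n₁ → Fin n) (K : Fin n₂ → Fin n),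
        (∑ J : Fin n₁ → Fin n, (f ((Pi.single J (1:k))) K) • aIJ k a I J)
          = ∑ J : Fin n₂ → Fin n, (f ((Pi.single I (1:k))) J) • aIJ k a J K)
    ∧ ∃ φ : FreeAlgebra k (Fin n × Fin n) →ₐ[k] A,
        (∀ i j, φ (FreeAlgebra.ι k (i, j)) = a i j)
        ∧ (∀ (I : Fin n₁ → Fin n) (K : Fin n₂ → Fin n),
            φ ((∑ J : Fin n₁ → Fin n, (f ((Pi.single J (1:k))) K) • tIJ k I J)
              - ∑ J : Fin n₂ → Fin n, (f ((Pi.single I (1:k))) J) • tIJ k J K) = 0)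
        ∧ (∀ z, Coalgebra.comul (R := k) (φ z)
            = TensorProduct.map φ.toLinearMap φ.toLinearMap (matDelta k n z))
        ∧ (∀ z, Coalgebra.counit (R := k) (φ z) = matEps k n z) := by

  classical
  have key : ∀ (I : Fin n₁ → Fin n) (K : Fin n₂ → Fin n),
      (∑ J : Fin n₁ → Fin n, (f ((Pi.single J (1:k))) K) • aIJ k a I J)
        = ∑ J : Fin n₂ → Fin n, (f ((Pi.single I (1:k))) J) • aIJ k a J K := by
    intro I K
    have h := hcolin (Pi.single I (1:k))
    set E : A ⊗[k] ((Fin n₂ → Fin n) → k) →ₗ[k] A :=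
      (TensorProduct.rid k A).toLinearMap.comp
        (TensorProduct.map LinearMap.id (LinearMap.proj K)) with hE
    have hEt : ∀ (x : A) (v : (Fin n₂ → Fin n) → k), E (x ⊗ₜ[k] v) = v K • x := by
      intro x v; simp [hE]
    have hdecomp : f (Pi.single I (1:k))
        = ∑ L : Fin n₂ → Fin n, f (Pi.single I (1:k)) L • (Pi.single L (1:k) : (Fin n₂ → Fin n) → k) := by
      conv_lhs => rw [← Finset.univ_sum_single (f (Pi.single I (1:k)))]
      refine Finset.sum_congr rfl fun L _ => ?_
      rw [← Pi.single_smul, smul_eq_mul, mul_one]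
    have hL : E (TensorProduct.map LinearMap.id f (ρ₁ (Pi.single I (1:k))))
        = ∑ J : Fin n₁ → Fin n, (f ((Pi.single J (1:k))) K) • aIJ k a I J := by
      rw [hρ₁ I, map_sum, map_sum]
      refine Finset.sum_congr rfl fun J _ => ?_
      rw [TensorProduct.map_tmul, hEt]
      rfl
    have hR : E (ρ₂ (f (Pi.single I (1:k))))
        = ∑ J : Fin n₂ → Fin n, (f ((Pi.single I (1:k))) J) • aIJ k a J K := by
      conv_lhs => rw [hdecomp, map_sum, map_sum]
      refine Finset.sum_congr rfl fun L _ => ?_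
      rw [map_smul, hρ₂ L, E.map_smul, map_sum]
      simp [hEt, Pi.single_apply]
    rw [← hL, h, hR]
  refine ⟨key, FreeAlgebra.lift k (fun p : Fin n × Fin n => a p.1 p.2), ?_, ?_, ?_, ?_⟩
  · intro i j; simp
  · intro I K
    have hφt : ∀ {ℓ : ℕ} (I J : Fin ℓ → Fin n),
        (FreeAlgebra.lift k (fun p : Fin n × Fin n => a p.1 p.2)) (tIJ k I J) = aIJ k a I J := by
      intro ℓ I J
      unfold tIJ aIJ
      rw [map_list_prod, List.map_ofFn]
      simp [Function.comp_def]
    rw [map_sub, map_sum, map_sum]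
    simp only [map_smul, hφt]
    rw [sub_eq_zero]
    exact key I K
  · intro z
    have hcomul : (Bialgebra.comulAlgHom k A).comp
          (FreeAlgebra.lift k (fun p : Fin n × Fin n => a p.1 p.2))
        = (Algebra.TensorProduct.map
            (FreeAlgebra.lift k (fun p : Fin n × Fin n => a p.1 p.2))
            (FreeAlgebra.lift k (fun p : Fin n × Fin n => a p.1 p.2))).comp (matDelta k n) := by
      apply FreeAlgebra.hom_ext
      funext p
      simp [matDelta, Bialgebra.comulAlgHom_apply, hΔ]
    have := DFunLike.congr_fun hcomul z
    simp only [AlgHom.comp_apply, Bialgebra.comulAlgHom_apply] at this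
    exact this
  · intro z
    have hcounit : (Bialgebra.counitAlgHom k A).comp
          (FreeAlgebra.lift k (fun p : Fin n × Fin n => a p.1 p.2)) = matEps k n := by
      apply FreeAlgebra.hom_ext
      funext p
      simp [matEps, Bialgebra.counitAlgHom_apply, hε]
    have := DFunLike.congr_fun hcounit z
    simpa [Bialgebra.counitAlgHom_apply] using this
end
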